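/- Let m ≥ 2, let b be a distinguished index among {1,…,m}, and let 0 < α < 1. For each i, let J_i* be the maximum of N_i i.i.d. random variables uniform on [c_i, d_i], all samples mutually independent, where for every i ≠ b one has N_i ≤ N_b, c_i ≤ c_b (with c_i < d_i, c_b < d_b) and d_i = c_b + α(d_b − c_b) with c_b < d_i ≤ d_b. If N_b ≥ T/(r·m) for reals T, r, m > 0, then the probability P_b that J_b* is at least every other J_i* satisfies P_b ≥ 1 − (1/2)(m − 1)·α^{T/(r·m)}. -/

import Mathlib

open MeasureTheory

/-- The uniform probability distribution on the interval `[c, d]`. -/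
noncomputable def uniformIcc (c d : ℝ) : Measure ℝ :=
  (ENNReal.ofReal (d - c))⁻¹ • volume.restrict (Set.Icc c d)

lemma uniformIcc_apply (c d : ℝ) (s : Set ℝ) :
    uniformIcc c d s = (ENNReal.ofReal (d - c))⁻¹ * volume (s ∩ Set.Icc c d) := by
  simp [uniformIcc, Measure.restrict_apply' measurableSet_Icc]

lemma uniformIcc_univ {c d : ℝ} (h : c < d) : uniformIcc c d Set.univ = 1 := by
  rw [uniformIcc_apply, Set.univ_inter, Real.volume_Icc]
  exact ENNReal.inv_mul_cancel (by simpa using sub_pos.2 h) ENNReal.ofReal_ne_top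

lemma uniformIcc_prob {c d : ℝ} (h : c < d) : IsProbabilityMeasure (uniformIcc c d) :=
  ⟨uniformIcc_univ h⟩

lemma uniformIcc_Iio {c d : ℝ} (h : c < d) (s : ℝ) :
    uniformIcc c d (Set.Iio s) = ENNReal.ofReal ((min s d - c) / (d - c)) := by
  rw [uniformIcc_apply]
  have hvol : volume (Set.Iio s ∩ Set.Icc c d) = ENNReal.ofReal (min s d - c) := by
    rcases le_or_gt s d with hsd | hsd
    · have : Set.Iio s ∩ Set.Icc c d = Set.Ico c s := by
        ext x
        constructor
        · rintro ⟨h1, h2, _⟩; exact ⟨h2, h1⟩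
        · rintro ⟨h1, h2⟩; exact ⟨h2, h1, le_of_lt (h2.trans_le hsd)⟩
      rw [this, Real.volume_Ico, min_eq_left hsd]
    · have : Set.Iio s ∩ Set.Icc c d = Set.Icc c d := by
        ext x
        constructor
        · rintro ⟨_, h2⟩; exact h2
        · rintro ⟨h1, h2⟩; exact ⟨h2.trans_lt hsd, h1, h2⟩
      rw [this, Real.volume_Icc, min_eq_right hsd.le]
  rw [hvol, ENNReal.ofReal_div_of_pos (sub_pos.2 h), ENNReal.div_eq_inv_mul]

lemma uniformIcc_Icc_self {c d : ℝ} (h : c < d) : uniformIcc c d (Set.Icc c d) = 1 := by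
  rw [uniformIcc_apply, Set.inter_self, Real.volume_Icc]
  exact ENNReal.inv_mul_cancel (by simpa using sub_pos.2 h) ENNReal.ofReal_ne_top

lemma pi_eval_preimage {ι : Type*} [Fintype ι] {β : ι → Type*} [∀ i, MeasurableSpace (β i)]
    (μ : ∀ i, Measure (β i)) [∀ i, IsProbabilityMeasure (μ i)] (j : ι) (t : Set (β j)) :
    Measure.pi μ (Function.eval j ⁻¹' t) = μ j t := by
  classical
  rw [Set.eval_preimage, Measure.pi_pi]
  rw [Finset.prod_eq_single j]
  · simp
  · intro k _ hk
    simp [Function.update_of_ne hk]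
  · simp

lemma phi_le {cb db ci di α s : ℝ} (hci : ci < di) (hcb : cb < db) (hccb : ci ≤ cb)
    (hα : di = cb + α * (db - cb)) (hdib : di ≤ db) (hs : s ≤ di) :
    (min s db - cb) / (db - cb) ≤ α * ((min s di - ci) / (di - ci)) := by
  have hdb : (0:ℝ) < db - cb := sub_pos.2 hcb
  have hdi : (0:ℝ) < di - ci := sub_pos.2 hci
  have h1 : min s db = s := min_eq_left (hs.trans hdib)
  have h2 : min s di = s := min_eq_left hs
  have hα' : α = (di - cb) / (db - cb) := by
    rw [eq_div_iff hdb.ne']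
    linarith
  rw [h1, h2, hα', div_mul_div_comm, div_le_div_iff₀ hdb (by positivity)]
  nlinarith [mul_nonneg (sub_nonneg.2 hccb) (sub_nonneg.2 hs), hdb.le]

lemma phi_le_one {c d s : ℝ} (h : c < d) : (min s d - c) / (d - c) ≤ 1 := by
  rw [div_le_one (sub_pos.2 h)]
  have := min_le_right s d
  linarith

lemma sup_lt_of_forall {n : ℕ} (hn : 0 < n) (v : Fin n → ℝ) (s : ℝ)
    (h : ∀ j, v j < s) : (⨆ j, v j) < s := by
  haveI : Nonempty (Fin n) := ⟨⟨0, hn⟩⟩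
  obtain ⟨j0, hj0⟩ := Finite.exists_max v
  exact lt_of_le_of_lt (ciSup_le hj0) (h j0)

lemma coord_lt_of_sup_lt {n : ℕ} (v : Fin n → ℝ) (s : ℝ)
    (h : (⨆ j, v j) < s) (j : Fin n) : v j < s :=
  lt_of_le_of_lt (le_ciSup (Set.Finite.bddAbove (Set.finite_range v)) j) h

lemma key_bound {m : ℕ} (b i : Fin m) (hib : i ≠ b)
    (N : Fin m → ℕ) (c d : Fin m → ℝ) (α : ℝ) (hα0 : 0 < α)
    (hN : ∀ k, 0 < N k) (hcd : ∀ k, c k < d k)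
    (hNle : N i ≤ N b) (hcc : c i ≤ c b) (hdα : d i = c b + α * (d b - c b))
    (hdd : d i ≤ d b) :
    (Measure.pi fun k : Fin m => Measure.pi fun _ : Fin (N k) => uniformIcc (c k) (d k))
      {ω : ∀ k : Fin m, Fin (N k) → ℝ | (⨆ j, ω b j) < ⨆ j, ω i j}
      ≤ ENNReal.ofReal (α ^ (N b)) / 2 := by
  classical
  haveI hprob : ∀ k, IsProbabilityMeasure (uniformIcc (c k) (d k)) := fun k => uniformIcc_prob (hcd k)
  set ν : ∀ k : Fin m, Measure (Fin (N k) → ℝ) :=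
    fun k => Measure.pi fun _ => uniformIcc (c k) (d k) with hν
  haveI hνprob : ∀ k, IsProbabilityMeasure (ν k) := fun k =>
    inferInstanceAs (IsProbabilityMeasure (Measure.pi fun _ : Fin (N k) => uniformIcc (c k) (d k)))
  set p : Fin m → Prop := fun j => j = i with hp
  clear_value p
  have hpres := measurePreserving_piEquivPiSubtypeProd ν p
  set ν₁ : Measure (∀ j : Subtype p, Fin (N ↑j) → ℝ) := Measure.pi fun j : Subtype p => ν ↑j with hν₁
  set ν₂ : Measure (∀ j : {j // ¬ p j}, Fin (N ↑j) → ℝ) :=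
    Measure.pi fun j : {j // ¬ p j} => ν ↑j with hν₂
  haveI : IsProbabilityMeasure ν₁ :=
    inferInstanceAs (IsProbabilityMeasure (Measure.pi fun j : Subtype p => ν ↑j))
  haveI : IsProbabilityMeasure ν₂ :=
    inferInstanceAs (IsProbabilityMeasure (Measure.pi fun j : {j // ¬ p j} => ν ↑j))
  set e := MeasurableEquiv.piEquivPiSubtypeProd (fun j : Fin m => Fin (N j) → ℝ) p with he
  have msup : ∀ n : ℕ, Measurable fun v : Fin n → ℝ => ⨆ j, v j := fun n =>
    Measurable.iSup fun j => measurable_pi_apply j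
  set i' : Subtype p := ⟨i, by simp only [hp]⟩ with hi'
  set b' : {j // ¬ p j} := ⟨b, by simp only [hp]; exact Ne.symm hib⟩ with hb'
  set S : Set ((∀ j : Subtype p, Fin (N ↑j) → ℝ) × (∀ j : {j // ¬ p j}, Fin (N ↑j) → ℝ)) :=
    {q | (⨆ j, q.2 b' j) < ⨆ j, q.1 i' j} with hS
  have hSm : MeasurableSet S :=
    measurableSet_lt ((msup (N b)).comp ((measurable_pi_apply b').comp measurable_snd))
      ((msup (N i)).comp ((measurable_pi_apply i').comp measurable_fst))
  have hpre : e ⁻¹' S = {ω : ∀ k : Fin m, Fin (N k) → ℝ | (⨆ j, ω b j) < ⨆ j, ω i j} := rfl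
  set W : Set ((∀ j : Subtype p, Fin (N ↑j) → ℝ) × (∀ j : Subtype p, Fin (N ↑j) → ℝ)) :=
    ⋂ j : Fin (N i), {q | q.2 i' j < ⨆ jj, q.1 i' jj} with hW
  have hWm : MeasurableSet W := MeasurableSet.iInter fun j =>
    measurableSet_lt ((measurable_pi_apply j).comp ((measurable_pi_apply i').comp measurable_snd))
      ((msup (N i)).comp ((measurable_pi_apply i').comp measurable_fst))
  have hfull : ∀ᵐ y ∂ν₁, ∀ j, y i' j ∈ Set.Icc (c i) (d i) := by
    rw [ae_iff]
    have hset : {y : ∀ j : Subtype p, Fin (N ↑j) → ℝ | ¬ ∀ j, y i' j ∈ Set.Icc (c i) (d i)} =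
        Function.eval i' ⁻¹' {v : Fin (N i) → ℝ | ∀ j, v j ∈ Set.Icc (c i) (d i)}ᶜ := rfl
    rw [hset, pi_eval_preimage (fun j : Subtype p => ν ↑j) i' _]
    have heq : {v : Fin (N i) → ℝ | ∀ j, v j ∈ Set.Icc (c i) (d i)} =
        Set.pi Set.univ fun _ => Set.Icc (c i) (d i) := by
      ext v; simp only [Set.mem_setOf_eq, Set.mem_univ_pi]
    have ht : ν i {v : Fin (N i) → ℝ | ∀ j, v j ∈ Set.Icc (c i) (d i)} = 1 := by
      rw [heq]
      show (Measure.pi fun _ : Fin (N i) => uniformIcc (c i) (d i)) _ = 1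
      rw [Measure.pi_pi]
      simp [uniformIcc_Icc_self (hcd i)]
    rw [measure_compl (by rw [heq]; exact MeasurableSet.univ_pi fun _ => measurableSet_Icc)
      (measure_ne_top _ _), ht]
    simp
  have hae : ∀ᵐ y ∂ν₁, ν₂ (Prod.mk y ⁻¹' S) ≤
      (ENNReal.ofReal α) ^ (N b) * ν₁ (Prod.mk y ⁻¹' W) := by
    refine hfull.mono fun y hy => ?_
    haveI : Nonempty (Fin (N i)) := ⟨⟨0, hN i⟩⟩
    have hsd : (⨆ j, y i' j) ≤ d i := ciSup_le fun j => (hy j).2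
    calc ν₂ (Prod.mk y ⁻¹' S)
        = ν b {v : Fin (N b) → ℝ | (⨆ j, v j) < ⨆ j, y i' j} := by
          have h1 : Prod.mk y ⁻¹' S =
              Function.eval b' ⁻¹' {v : Fin (N b) → ℝ | (⨆ j, v j) < ⨆ j, y i' j} := rfl
          rw [h1]
          exact pi_eval_preimage (fun j : {j // ¬ p j} => ν ↑j) b' _
      _ ≤ ν b {v : Fin (N b) → ℝ | ∀ j, v j < ⨆ j, y i' j} :=
          measure_mono fun v hv j => coord_lt_of_sup_lt v _ hv j
      _ = (ENNReal.ofReal ((min (⨆ j, y i' j) (d b) - c b) / (d b - c b))) ^ (N b) := by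
          have h2 : {v : Fin (N b) → ℝ | ∀ j, v j < ⨆ j, y i' j} =
              Set.pi Set.univ fun _ => Set.Iio (⨆ j, y i' j) := by ext v; simp [Set.mem_pi]
          rw [h2]
          show (Measure.pi fun _ : Fin (N b) => uniformIcc (c b) (d b)) _ = _
          rw [Measure.pi_pi]
          simp [uniformIcc_Iio (hcd b)]
      _ ≤ (ENNReal.ofReal (α * ((min (⨆ j, y i' j) (d i) - c i) / (d i - c i)))) ^ (N b) :=
          pow_le_pow_left₀ zero_le
            (ENNReal.ofReal_le_ofReal (phi_le (hcd i) (hcd b) hcc hdα hdd hsd)) _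
      _ = (ENNReal.ofReal α) ^ (N b) *
            (ENNReal.ofReal ((min (⨆ j, y i' j) (d i) - c i) / (d i - c i))) ^ (N b) := by
          rw [ENNReal.ofReal_mul hα0.le, mul_pow]
      _ ≤ (ENNReal.ofReal α) ^ (N b) *
            (ENNReal.ofReal ((min (⨆ j, y i' j) (d i) - c i) / (d i - c i))) ^ (N i) :=
          mul_le_mul_right
            (pow_le_pow_right_of_le_one' (ENNReal.ofReal_le_one.2 (phi_le_one (hcd i))) hNle) _
      _ = (ENNReal.ofReal α) ^ (N b) * ν i {z : Fin (N i) → ℝ | ∀ j, z j < ⨆ j, y i' j} := by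
          congr 1
          have h3 : {z : Fin (N i) → ℝ | ∀ j, z j < ⨆ j, y i' j} =
              Set.pi Set.univ fun _ => Set.Iio (⨆ j, y i' j) := by ext z; simp [Set.mem_pi]
          rw [h3]
          show _ = (Measure.pi fun _ : Fin (N i) => uniformIcc (c i) (d i)) _
          rw [Measure.pi_pi]
          simp [uniformIcc_Iio (hcd i)]
      _ = (ENNReal.ofReal α) ^ (N b) * ν₁ (Prod.mk y ⁻¹' W) := by
          congr 1
          have h4 : Prod.mk y ⁻¹' W =
              Function.eval i' ⁻¹' {z : Fin (N i) → ℝ | ∀ j, z j < ⨆ j, y i' j} := by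
            ext z
            simp only [hW, Set.mem_preimage, Set.mem_iInter, Set.mem_setOf_eq, Function.eval]
            exact Iff.rfl
          rw [h4, pi_eval_preimage (fun j : Subtype p => ν ↑j) i' _]
  have hhalf : (ν₁.prod ν₁) W ≤ 1 / 2 := by
    set W' : Set ((∀ j : Subtype p, Fin (N ↑j) → ℝ) × (∀ j : Subtype p, Fin (N ↑j) → ℝ)) :=
      {q | (⨆ j, q.2 i' j) < ⨆ j, q.1 i' j} with hW'
    set W'' : Set ((∀ j : Subtype p, Fin (N ↑j) → ℝ) × (∀ j : Subtype p, Fin (N ↑j) → ℝ)) :=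
      {q | (⨆ j, q.1 i' j) < ⨆ j, q.2 i' j} with hW''
    have hW'm : MeasurableSet W' :=
      measurableSet_lt ((msup (N i)).comp ((measurable_pi_apply i').comp measurable_snd))
        ((msup (N i)).comp ((measurable_pi_apply i').comp measurable_fst))
    have hW''m : MeasurableSet W'' :=
      measurableSet_lt ((msup (N i)).comp ((measurable_pi_apply i').comp measurable_fst))
        ((msup (N i)).comp ((measurable_pi_apply i').comp measurable_snd))
    have hsub : W ⊆ W' := fun q hq =>
      sup_lt_of_forall (hN i) _ _ fun j => Set.mem_iInter.1 hq j
    have hswap : (ν₁.prod ν₁) W' = (ν₁.prod ν₁) W'' := by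
      have h1 : W' = Prod.swap ⁻¹' W'' := rfl
      calc (ν₁.prod ν₁) W' = (Measure.map Prod.swap (ν₁.prod ν₁)) W'' := by
            rw [h1, Measure.map_apply measurable_swap hW''m]
        _ = (ν₁.prod ν₁) W'' := by rw [Measure.prod_swap]
    have hd : Disjoint W' W'' := by
      rw [Set.disjoint_left]
      intro q hq hq'
      simp only [hW', hW'', Set.mem_setOf_eq] at hq hq'
      exact absurd hq' (not_lt.2 hq.le)
    have hle1 : (ν₁.prod ν₁) W' + (ν₁.prod ν₁) W'' ≤ 1 := by
      rw [← measure_union hd hW''m]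
      exact prob_le_one
    rw [← hswap] at hle1
    have h2 : 2 * (ν₁.prod ν₁) W' ≤ 1 := by rw [two_mul]; exact hle1
    calc (ν₁.prod ν₁) W ≤ (ν₁.prod ν₁) W' := measure_mono hsub
      _ ≤ 1 / 2 := by
        rw [ENNReal.le_div_iff_mul_le (Or.inl two_ne_zero) (Or.inl ENNReal.ofNat_ne_top), mul_comm]
        exact h2
  calc (Measure.pi ν) {ω : ∀ k : Fin m, Fin (N k) → ℝ | (⨆ j, ω b j) < ⨆ j, ω i j}
      = (ν₁.prod ν₂) S := by
        rw [← hpre, hpres.measure_preimage hSm.nullMeasurableSet]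
    _ = ∫⁻ y, ν₂ (Prod.mk y ⁻¹' S) ∂ν₁ := Measure.prod_apply hSm
    _ ≤ ∫⁻ y, (ENNReal.ofReal α) ^ (N b) * ν₁ (Prod.mk y ⁻¹' W) ∂ν₁ := lintegral_mono_ae hae
    _ = (ENNReal.ofReal α) ^ (N b) * ∫⁻ y, ν₁ (Prod.mk y ⁻¹' W) ∂ν₁ :=
        lintegral_const_mul _ (measurable_measure_prodMk_left hWm)
    _ = (ENNReal.ofReal α) ^ (N b) * (ν₁.prod ν₁) W := by rw [← Measure.prod_apply hWm]
    _ ≤ (ENNReal.ofReal α) ^ (N b) * (1 / 2) := mul_le_mul_right hhalf _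
    _ = ENNReal.ofReal (α ^ (N b)) / 2 := by rw [← ENNReal.ofReal_pow hα0.le, mul_one_div]


/-- If in addition `d_i = c_b + α(d_b − c_b)` for every `i ≠ b` with `0 < α < 1`,
and the best start node receives at least `T/(r·m)` samples, then the
probability `P_b` that `J_b*` is at least every other `J_i*` satisfies
`P_b ≥ 1 − (1/2)(m − 1)·α^{T/(r·m)}`. -/
theorem stmt8 (m : ℕ) (hm : 2 ≤ m) (b : Fin m)
    (N : Fin m → ℕ) (c d : Fin m → ℝ) (α : ℝ) (hα : α ∈ Set.Ioo (0 : ℝ) 1)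
    (hN : ∀ i, 0 < N i) (hcd : ∀ i, c i < d i)
    (hNle : ∀ i, i ≠ b → N i ≤ N b)
    (hcc : ∀ i, i ≠ b → c i ≤ c b)
    (hdα : ∀ i, i ≠ b → d i = c b + α * (d b - c b))
    (hcbd : ∀ i, i ≠ b → c b < d i)
    (hdd : ∀ i, i ≠ b → d i ≤ d b)
    (T r : ℝ) (hT : 0 < T) (hr : 0 < r)
    (hNb : T / (r * m) ≤ (N b : ℝ)) :
    ENNReal.ofReal (1 - (1 / 2) * ((m : ℝ) - 1) * α ^ (T / (r * (m : ℝ)))) ≤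
      (Measure.pi fun i : Fin m =>
          Measure.pi fun _ : Fin (N i) => uniformIcc (c i) (d i))
        {ω : ∀ i : Fin m, Fin (N i) → ℝ |
          ∀ i, i ≠ b → (⨆ j, ω i j) ≤ ⨆ j, ω b j} := by
  classical
  obtain ⟨hα0, hα1⟩ := hα
  haveI hprob : ∀ k, IsProbabilityMeasure (uniformIcc (c k) (d k)) := fun k =>
    uniformIcc_prob (hcd k)
  set μ := (Measure.pi fun i : Fin m =>
    Measure.pi fun _ : Fin (N i) => uniformIcc (c i) (d i)) with hμ
  haveI : ∀ k : Fin m,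
      IsProbabilityMeasure (Measure.pi fun _ : Fin (N k) => uniformIcc (c k) (d k)) :=
    fun k => inferInstance
  haveI : IsProbabilityMeasure μ := by rw [hμ]; infer_instance
  have msup : ∀ n : ℕ, Measurable fun v : Fin n → ℝ => ⨆ j, v j := fun n =>
    Measurable.iSup fun j => measurable_pi_apply j
  set E := {ω : ∀ i : Fin m, Fin (N i) → ℝ |
      ∀ i, i ≠ b → (⨆ j, ω i j) ≤ ⨆ j, ω b j} with hE
  have hEm : MeasurableSet E := by
    have hEeq : E = ⋂ i, ⋂ (_ : i ≠ b),
        {ω : ∀ i : Fin m, Fin (N i) → ℝ | (⨆ j, ω i j) ≤ ⨆ j, ω b j} := by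
      ext ω; simp [hE, Set.mem_iInter]
    rw [hEeq]
    exact MeasurableSet.iInter fun i => MeasurableSet.iInter fun _ =>
      measurableSet_le ((msup (N i)).comp (measurable_pi_apply i))
        ((msup (N b)).comp (measurable_pi_apply b))
  set t := T / (r * (m : ℝ)) with htdef
  have hkey : ∀ i : Fin m, i ≠ b →
      μ {ω : ∀ k : Fin m, Fin (N k) → ℝ | (⨆ j, ω b j) < ⨆ j, ω i j} ≤
        ENNReal.ofReal (α ^ t) / 2 := by
    intro i hi
    have h1 := key_bound b i hi N c d α hα0 hN hcd (hNle i hi) (hcc i hi) (hdα i hi) (hdd i hi)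
    rw [hμ]
    refine le_trans h1 (ENNReal.div_le_div_right (ENNReal.ofReal_le_ofReal ?_) 2)
    have h2 : α ^ (N b) = α ^ ((N b : ℕ) : ℝ) := (Real.rpow_natCast α (N b)).symm
    rw [h2]
    exact Real.rpow_le_rpow_of_exponent_ge hα0 hα1.le hNb
  have hsub : Eᶜ ⊆ ⋃ i ∈ Finset.univ.erase b,
      {ω : ∀ k : Fin m, Fin (N k) → ℝ | (⨆ j, ω b j) < ⨆ j, ω i j} := by
    intro ω hω
    simp only [hE, Set.mem_compl_iff, Set.mem_setOf_eq, not_forall] at hω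
    obtain ⟨i, hi, hlt⟩ := hω
    refine Set.mem_biUnion (Finset.mem_erase.2 ⟨hi, Finset.mem_univ i⟩) ?_
    exact not_le.1 hlt
  have hm1 : (1 : ℝ) ≤ (m : ℝ) := by exact_mod_cast (le_trans one_le_two hm)
  have hcompl : μ Eᶜ ≤ ENNReal.ofReal ((1 / 2) * ((m : ℝ) - 1) * α ^ t) := by
    calc μ Eᶜ ≤ ∑ i ∈ Finset.univ.erase b,
          μ {ω : ∀ k : Fin m, Fin (N k) → ℝ | (⨆ j, ω b j) < ⨆ j, ω i j} :=
        (measure_mono hsub).trans (measure_biUnion_finset_le _ _)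
      _ ≤ ∑ _i ∈ Finset.univ.erase b, ENNReal.ofReal (α ^ t) / 2 :=
        Finset.sum_le_sum fun i hi => hkey i (Finset.mem_erase.1 hi).1
      _ = (Finset.univ.erase b).card • (ENNReal.ofReal (α ^ t) / 2) := by
        rw [Finset.sum_const]
      _ = ENNReal.ofReal ((1 / 2) * ((m : ℝ) - 1) * α ^ t) := by
        rw [Finset.card_erase_of_mem (Finset.mem_univ b), Finset.card_univ, Fintype.card_fin]
        rw [nsmul_eq_mul, ← ENNReal.ofReal_natCast]
        have hhalf : ENNReal.ofReal (α ^ t) / 2 = ENNReal.ofReal (α ^ t / 2) := by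
          rw [ENNReal.ofReal_div_of_pos (by norm_num : (0:ℝ) < 2)]
          norm_num
        rw [hhalf, ← ENNReal.ofReal_mul (by positivity)]
        congr 1
        rw [Nat.cast_sub (le_trans one_le_two hm)]
        push_cast
        ring
  have hq0 : 0 ≤ (1 / 2) * ((m : ℝ) - 1) * α ^ t :=
    mul_nonneg (mul_nonneg (by norm_num) (by linarith)) (Real.rpow_pos_of_pos hα0 t).le
  calc ENNReal.ofReal (1 - (1 / 2) * ((m : ℝ) - 1) * α ^ t)
      = 1 - ENNReal.ofReal ((1 / 2) * ((m : ℝ) - 1) * α ^ t) := by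
        rw [ENNReal.ofReal_sub _ hq0, ENNReal.ofReal_one]
    _ ≤ 1 - μ Eᶜ := tsub_le_tsub_left hcompl 1
    _ = μ E := by rw [← prob_compl_eq_one_sub hEm.compl, compl_compl]
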